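/- Let N ≥ 2 be an integer, w ≥ 0 an integer, ω a Dirichlet character modulo N, τ ∈ ℋ, and s ∈ ℂ with w + 2 Re(s) > 2. Then Σ_{α∈(ℤ/Nℤ)^×} ω(α) E^{(w)}_{α̃/N}(τ,s) = (−2πi)^{−w} π^{−s} Γ(s+w) Im(τ)^s N^{w+2s} E_{w,N}(τ,s,ω), where α̃ ∈ {1,…,N−1} is the representative of α, and all series involved converge absolutely. -/

import Mathlib

open Complex

noncomputable section

/-- The `(m,n)`-term of the series defining `E^{(w)}_α(τ,s)`. -/
def ETerm (w : ℕ) (α : ℝ) (τ : ℂ) (s : ℂ) (p : ℤ × ℤ) : ℂ :=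
  ((τ.im : ℂ)) ^ s /
    (((p.1 : ℂ) * τ + (p.2 : ℂ) + (α : ℂ)) ^ w *
      ((Complex.normSq ((p.1 : ℂ) * τ + (p.2 : ℂ) + (α : ℂ)) : ℂ)) ^ s)

/-- The real-analytic Eisenstein series
`E^{(w)}_α(τ,s) = (−2πi)^{−w} π^{−s} Γ(s+w) Σ'_{(m,n)} y^s/((mτ+n+α)^w |mτ+n+α|^{2s})`,
where the term `(m,n) = (0,0)` is omitted when `α ∈ ℤ`. -/
def E (w : ℕ) (α : ℝ) (τ : ℂ) (s : ℂ) : ℂ :=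
  (-(2 * (Real.pi : ℂ) * Complex.I)) ^ (-(w : ℤ)) * (Real.pi : ℂ) ^ (-s) *
    Complex.Gamma (s + (w : ℂ)) *
    ∑' p : {q : ℤ × ℤ // (∃ z : ℤ, α = (z : ℝ)) → q ≠ 0}, ETerm w α τ s p.1

/-- The `(m,n)`-term of the series defining `E_{w,N}(τ,s,ω)`. -/
def EwNTerm (N : ℕ) (w : ℕ) (ω : DirichletCharacter ℂ N) (τ : ℂ) (s : ℂ) (p : ℤ × ℤ) : ℂ :=
  ω ((p.2 : ℤ) : ZMod N) /
    (((N : ℂ) * (p.1 : ℂ) * τ + (p.2 : ℂ)) ^ w *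
      ((Complex.normSq ((N : ℂ) * (p.1 : ℂ) * τ + (p.2 : ℂ)) : ℂ)) ^ s)

/-- The Eisenstein series `E_{w,N}(τ,s,ω) = Σ'_{(m,n)} ω(n)/((Nmτ+n)^w |Nmτ+n|^{2s})`. -/
def EwN (N : ℕ) (w : ℕ) (ω : DirichletCharacter ℂ N) (τ : ℂ) (s : ℂ) : ℂ :=
  ∑' p : {q : ℤ × ℤ // q ≠ 0}, EwNTerm N w ω τ s p.1

end

private lemma linNe {N : ℕ} (hN : N ≠ 0) {τ : ℂ} (hτ : 0 < τ.im) {m : ℤ} {c : ℂ}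
    (hc : c.im = 0) (h : ¬(m = 0 ∧ c = 0)) : (N : ℂ) * (m : ℂ) * τ + c ≠ 0 := by
  intro h0
  have him : (N : ℝ) * (m : ℝ) * τ.im = 0 := by
    have := congrArg Complex.im h0
    simpa [Complex.add_im, Complex.mul_im, hc] using this
  have hm : m = 0 := by
    have hN' : (N : ℝ) ≠ 0 := Nat.cast_ne_zero.mpr hN
    rcases mul_eq_zero.mp him with h1 | h2
    · rcases mul_eq_zero.mp h1 with h3 | h4
      · exact absurd h3 hN'
      · exact_mod_cast h4
    · exact absurd h2 hτ.ne'
  refine h ⟨hm, ?_⟩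
  simpa [hm] using h0

private lemma Lne0 {N a : ℕ} (ha : 0 < a) (haN : a < N) {τ : ℂ} (hτ : 0 < τ.im) (m n : ℤ) :
    (N : ℂ) * (m : ℂ) * τ + ((N * n + a : ℤ) : ℂ) ≠ 0 := by
  refine linNe (by omega) hτ (by simp) ?_
  rintro ⟨-, h2⟩
  have h3 : ((N : ℤ) * n + a : ℤ) = 0 := by exact_mod_cast h2
  have hdvd : (N : ℤ) ∣ (a : ℤ) := ⟨-n, by linarith⟩
  have := Nat.le_of_dvd ha (Int.natCast_dvd_natCast.mp hdvd)
  omega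

private lemma cpow_two_mul (N : ℕ) (hN : N ≠ 0) (s : ℂ) :
    ((((N:ℝ)^2 : ℝ)) : ℂ) ^ s = (N : ℂ) ^ (2 * s) := by
  have h1 : ((((N:ℝ)^2 : ℝ)) : ℂ) = (N : ℂ) ^ ((2:ℕ) : ℂ) := by
    rw [Complex.cpow_natCast]; push_cast; ring
  have hlog : (Complex.log (N:ℂ)).im = 0 := by
    rw [← Complex.natCast_log]
    exact Complex.ofReal_im _
  rw [h1, ← Complex.cpow_mul]
  · norm_num
  · simp only [Complex.mul_im, hlog]
    norm_num
    linarith [Real.pi_pos]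
  · simp only [Complex.mul_im, hlog]
    norm_num
    linarith [Real.pi_pos]

private lemma ETerm_eq {τ : ℂ} (hτ : 0 < τ.im) {N a : ℕ} (ha : 0 < a) (haN : a < N)
    (w : ℕ) (s : ℂ) (p : ℤ × ℤ) :
    ETerm w ((a : ℝ) / N) τ s p
      = (τ.im : ℂ) ^ s * (N : ℂ) ^ ((w : ℂ) + 2 * s) *
        (1 / (((N : ℂ) * (p.1 : ℂ) * τ + ((N * p.2 + a : ℤ) : ℂ)) ^ w *
          ((Complex.normSq ((N : ℂ) * (p.1 : ℂ) * τ + ((N * p.2 + a : ℤ) : ℂ)) : ℝ) : ℂ) ^ s)) := by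
  have hN0 : N ≠ 0 := by omega
  have hNc : (N : ℂ) ≠ 0 := Nat.cast_ne_zero.mpr hN0
  have hNR : (0:ℝ) < N := by positivity
  set L : ℂ := (N : ℂ) * (p.1 : ℂ) * τ + ((N * p.2 + a : ℤ) : ℂ) with hLdef
  have hL : L ≠ 0 := Lne0 ha haN hτ p.1 p.2
  have hM : (p.1 : ℂ) * τ + (p.2 : ℂ) + (((a : ℝ) / N : ℝ) : ℂ) = L / N := by
    rw [hLdef]; push_cast; field_simp; ring
  have hnormSq : Complex.normSq (L / N) = Complex.normSq L / (N:ℝ)^2 := by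
    rw [map_div₀ Complex.normSq]
    congr 1
    rw [show ((N:ℂ)) = (((N:ℝ)):ℂ) by norm_num, Complex.normSq_ofReal]
    ring
  have hd : (0:ℝ) ≤ Complex.normSq L / (N:ℝ)^2 :=
    div_nonneg (Complex.normSq_nonneg L) (by positivity)
  have hcp2 : (N:ℂ) ^ (2*s) ≠ 0 := by
    rw [Ne, Complex.cpow_eq_zero_iff]; simp [hNc]
  have hsplit : (((Complex.normSq L / (N:ℝ)^2 : ℝ)) : ℂ) ^ s
      = ((Complex.normSq L : ℝ) : ℂ) ^ s / ((N : ℂ) ^ (2 * s)) := by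
    have h3 := mul_cpow_ofReal_nonneg hd (by positivity : (0:ℝ) ≤ (N:ℝ)^2) s
    rw [← Complex.ofReal_mul, div_mul_cancel₀ _ (by positivity : ((N:ℝ)^2) ≠ 0)] at h3
    rw [eq_div_iff hcp2, ← cpow_two_mul N hN0 s]
    exact h3.symm
  rw [ETerm, hM, hnormSq, hsplit, div_pow]
  have h4 : (N:ℂ) ^ ((w:ℂ) + 2*s) = (N:ℂ)^w * (N:ℂ)^(2*s) := by
    rw [Complex.cpow_add _ _ hNc, Complex.cpow_natCast]
  have hLw : L ^ w ≠ 0 := pow_ne_zero _ hL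
  have hNw : (N:ℂ) ^ w ≠ 0 := pow_ne_zero _ hNc
  have hcp : ((Complex.normSq L : ℝ) : ℂ) ^ s ≠ 0 := by
    rw [Ne, Complex.cpow_eq_zero_iff]
    simp [Complex.normSq_eq_zero, hL]
  rw [h4]
  field_simp
  try ring

open EisensteinSeries in
private lemma coreSummable (z : UpperHalfPlane) {k : ℝ} (hk : 2 < k) :
    Summable fun p : ℤ × ℤ => ‖(p.1 : ℂ) * (z : ℂ) + (p.2 : ℂ)‖ ^ (-k) := by
  have h2 : Summable fun (x : Fin 2 → ℤ) =>
      ‖(x 0 : ℂ) * (z : ℂ) + (x 1 : ℂ)‖ ^ (-k) := by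
    apply ((summable_one_div_norm_rpow hk).mul_left (r z ^ (-k))).of_nonneg_of_le
      (fun _ => Real.rpow_nonneg (norm_nonneg _) _)
    intro x
    exact summand_bound z (by linarith) x
  have h3 := ((finTwoArrowEquiv ℤ).symm.summable_iff
    (f := fun (x : Fin 2 → ℤ) => ‖(x 0 : ℂ) * (z : ℂ) + (x 1 : ℂ)‖ ^ (-k))).mpr h2
  refine h3.congr fun p => ?_
  simp [finTwoArrowEquiv]

private lemma denomNorm (w : ℕ) (s : ℂ) {L : ℂ} (hL : L ≠ 0) :
    ‖L ^ w * ((Complex.normSq L : ℝ) : ℂ) ^ s‖ = ‖L‖ ^ ((w : ℝ) + 2 * s.re) := by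
  have ha : 0 < ‖L‖ := norm_pos_iff.mpr hL
  rw [norm_mul, norm_pow,
    Complex.norm_cpow_eq_rpow_re_of_pos (Complex.normSq_pos.mpr hL), Complex.normSq_eq_norm_sq,
    ← Real.rpow_natCast ‖L‖ 2, ← Real.rpow_mul ha.le,
    ← Real.rpow_natCast ‖L‖ w, ← Real.rpow_add ha]
  norm_num [mul_comm]

private lemma ETerm_norm {τ : ℂ} (hτ : 0 < τ.im) {N a : ℕ} (ha : 0 < a) (haN : a < N)
    (w : ℕ) (s : ℂ) (p : ℤ × ℤ) :
    ‖ETerm w ((a : ℝ) / N) τ s p‖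
      = (τ.im ^ s.re * (N:ℝ) ^ ((w:ℝ) + 2*s.re)) *
        ‖(N:ℂ) * (p.1:ℂ) * τ + ((N * p.2 + a : ℤ):ℂ)‖ ^ (-((w:ℝ) + 2*s.re)) := by
  have hL : (N : ℂ) * (p.1 : ℂ) * τ + ((N * p.2 + a : ℤ) : ℂ) ≠ 0 := Lne0 ha haN hτ p.1 p.2
  have habs : 0 < ‖(N : ℂ) * (p.1 : ℂ) * τ + ((N * p.2 + a : ℤ) : ℂ)‖ :=
    norm_pos_iff.mpr hL
  have hNpow : ‖(N:ℂ) ^ ((w:ℂ) + 2*s)‖ = (N:ℝ) ^ ((w:ℝ) + 2*s.re) := by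
    rw [show ((N:ℂ)) = (((N:ℝ)):ℂ) by norm_num,
      Complex.norm_cpow_eq_rpow_re_of_pos (by exact_mod_cast ha.trans haN : (0:ℝ) < (N:ℝ))]
    congr 1
    simp [Complex.add_re, Complex.mul_re]
  rw [ETerm_eq hτ ha haN w s p, norm_mul, norm_mul, norm_div, norm_one,
    denomNorm w s hL, hNpow,
    Complex.norm_cpow_eq_rpow_re_of_pos hτ, Real.rpow_neg (norm_nonneg _)]
  ring

/-- `Σ_{α∈(ℤ/Nℤ)ˣ} ω(α) E^{(w)}_{α̃/N}(τ,s) = (−2πi)^{−w} π^{−s} Γ(s+w) Im(τ)^s N^{w+2s} E_{w,N}(τ,s,ω)`,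
all series involved converging absolutely. -/
theorem sum_E_eq_EwN
    (N : ℕ) (hN : 2 ≤ N) [NeZero N] (w : ℕ) (ω : DirichletCharacter ℂ N)
    (τ : UpperHalfPlane) (s : ℂ) (hs : (w : ℝ) + 2 * s.re > 2) :
    (∀ α : (ZMod N)ˣ,
      Summable (fun p : {q : ℤ × ℤ //
          (∃ z : ℤ, (((α : ZMod N).val : ℝ) / N) = (z : ℝ)) → q ≠ 0} =>
        ‖ETerm w (((α : ZMod N).val : ℝ) / N) (τ : ℂ) s p.1‖)) ∧
    Summable (fun p : {q : ℤ × ℤ // q ≠ 0} => ‖EwNTerm N w ω (τ : ℂ) s p.1‖) ∧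
    ∑ α : (ZMod N)ˣ, ω α * E w (((α : ZMod N).val : ℝ) / N) (τ : ℂ) s
      = (-(2 * (Real.pi : ℂ) * Complex.I)) ^ (-(w : ℤ)) * (Real.pi : ℂ) ^ (-s) *
          Complex.Gamma (s + (w : ℂ)) * ((τ.im : ℝ) : ℂ) ^ s *
          (N : ℂ) ^ ((w : ℂ) + 2 * s) * EwN N w ω (τ : ℂ) s := by
  have hτ : 0 < (τ : ℂ).im := τ.2
  have hk : 2 < (w : ℝ) + 2 * s.re := hs
  have hN0 : N ≠ 0 := by omega
  have hNc : (N : ℂ) ≠ 0 := Nat.cast_ne_zero.mpr hN0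
  haveI : Fact (1 < N) := ⟨by omega⟩
  have hzim : 0 < ((N : ℂ) * (τ : ℂ)).im := by
    rw [Complex.mul_im]
    simp only [Complex.natCast_re, Complex.natCast_im, zero_mul, add_zero]
    exact mul_pos (by exact_mod_cast Nat.pos_of_ne_zero hN0) hτ
  set z : UpperHalfPlane := ⟨(N : ℂ) * (τ : ℂ), hzim⟩ with hzdef
  have hz : (z : ℂ) = (N : ℂ) * (τ : ℂ) := rfl
  have hval : ∀ α : (ZMod N)ˣ, 0 < (α : ZMod N).val ∧ (α : ZMod N).val < N := by
    intro α
    refine ⟨?_, ZMod.val_lt _⟩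
    rcases Nat.eq_zero_or_pos (α : ZMod N).val with h | h
    · have h0 : ((α : ZMod N)) = 0 := by rwa [ZMod.val_eq_zero] at h
      have hU := α.isUnit
      rw [h0] at hU
      exact absurd hU not_isUnit_zero
    · exact h
  have hcore' : Summable fun p : ℤ × ℤ =>
      ‖(N : ℂ) * (p.1 : ℂ) * (τ : ℂ) + (p.2 : ℂ)‖ ^ (-((w : ℝ) + 2 * s.re)) := by
    refine (coreSummable z hk).congr fun p => ?_
    have h : (p.1 : ℂ) * (z : ℂ) + (p.2 : ℂ) = (N : ℂ) * (p.1 : ℂ) * (τ : ℂ) + (p.2 : ℂ) := by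
      rw [hz]; ring
    rw [h]
  have hET : ∀ α : (ZMod N)ˣ,
      Summable fun p : ℤ × ℤ => ‖ETerm w (((α : ZMod N).val : ℝ) / N) (τ : ℂ) s p‖ := by
    intro α
    obtain ⟨ha, haN⟩ := hval α
    have hinj : Function.Injective
        (fun p : ℤ × ℤ => (p.1, (N : ℤ) * p.2 + ((α : ZMod N).val : ℤ))) := by
      intro x y hxy
      simp only [Prod.mk.injEq] at hxy
      obtain ⟨h1, h2⟩ := hxy
      have hNz : (N : ℤ) ≠ 0 := by exact_mod_cast hN0
      have h3 : x.2 = y.2 := mul_left_cancel₀ hNz (by linarith)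
      exact Prod.ext h1 h3
    have hs2 := ((hcore'.comp_injective hinj).mul_left
      ((τ : ℂ).im ^ s.re * (N : ℝ) ^ ((w : ℝ) + 2 * s.re)))
    refine hs2.congr fun p => ?_
    exact (ETerm_norm hτ ha haN w s p).symm
  have hω0 : ω (0 : ZMod N) = 0 := ω.map_nonunit not_isUnit_zero
  have hEwN0 : EwNTerm N w ω (τ : ℂ) s 0 = 0 := by
    simp [EwNTerm, hω0]
  have hbound : ∀ p : ℤ × ℤ, ‖EwNTerm N w ω (τ : ℂ) s p‖ ≤
      ‖(N : ℂ) * (p.1 : ℂ) * (τ : ℂ) + (p.2 : ℂ)‖ ^ (-((w : ℝ) + 2 * s.re)) := by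
    intro p
    by_cases hp : p = 0
    · rw [hp, hEwN0, norm_zero]
      positivity
    · have hL : (N : ℂ) * (p.1 : ℂ) * (τ : ℂ) + (p.2 : ℂ) ≠ 0 := by
        refine linNe hN0 hτ (by simp) ?_
        rintro ⟨h1, h2⟩
        apply hp
        have h2' : p.2 = 0 := by exact_mod_cast h2
        exact Prod.ext h1 h2'
      have habs : 0 < ‖(N : ℂ) * (p.1 : ℂ) * (τ : ℂ) + (p.2 : ℂ)‖ :=
        norm_pos_iff.mpr hL
      rw [EwNTerm, norm_div, denomNorm w s hL, Real.rpow_neg (norm_nonneg _),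
        inv_eq_one_div]
      exact (div_le_div_iff_of_pos_right (Real.rpow_pos_of_pos habs _)).mpr
        (DirichletCharacter.norm_le_one ω _)
  have hEwNnorm : Summable fun p : ℤ × ℤ => ‖EwNTerm N w ω (τ : ℂ) s p‖ :=
    Summable.of_nonneg_of_le (fun _ => norm_nonneg _) hbound hcore'
  refine ⟨fun α => (hET α).subtype _, hEwNnorm.subtype _, ?_⟩
  have hgsum : Summable fun p : ℤ × ℤ => EwNTerm N w ω (τ : ℂ) s p := hEwNnorm.of_norm
  set ι : (ZMod N)ˣ × (ℤ × ℤ) → ℤ × ℤ :=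
    fun x => (x.2.1, (N : ℤ) * x.2.2 + ((x.1 : ZMod N).val : ℤ)) with hιdef
  have hcast : ∀ (α : (ZMod N)ˣ) (n : ℤ),
      ((((N : ℤ) * n + ((α : ZMod N).val : ℤ)) : ℤ) : ZMod N) = (α : ZMod N) := by
    intro α n
    push_cast
    simp [ZMod.natCast_self, ZMod.natCast_val, ZMod.cast_id]
  have hιinj : Function.Injective ι := by
    rintro ⟨α, m, n⟩ ⟨β, m', n'⟩ h
    simp only [hιdef, Prod.mk.injEq] at h
    obtain ⟨h1, h2⟩ := h
    have hαβ : (α : ZMod N) = (β : ZMod N) := by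
      have h4 := congrArg (fun t : ℤ => ((t : ℤ) : ZMod N)) h2
      simpa [hcast] using h4
    have hαβ' : α = β := Units.ext hαβ
    subst hαβ'
    have hNz : (N : ℤ) ≠ 0 := by exact_mod_cast hN0
    have h3 : n = n' := mul_left_cancel₀ hNz (by linarith)
    simp [h1, h3]
  have hsupp : Function.support (fun p => EwNTerm N w ω (τ : ℂ) s p) ⊆ Set.range ι := by
    intro q hq
    have hunit : IsUnit ((q.2 : ℤ) : ZMod N) := by
      by_contra hu
      exact hq (show EwNTerm N w ω (↑τ) s q = 0 by
        rw [EwNTerm, ω.map_nonunit hu, zero_div])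
    obtain ⟨u, hu⟩ := hunit
    have hzm : (((q.2 - ((u : ZMod N).val : ℤ)) : ℤ) : ZMod N) = 0 := by
      push_cast
      rw [ZMod.natCast_val, ZMod.cast_id, hu, sub_self]
    obtain ⟨t, ht⟩ := (ZMod.intCast_zmod_eq_zero_iff_dvd _ N).mp hzm
    refine ⟨(u, (q.1, t)), ?_⟩
    simp only [hιdef]
    refine Prod.ext rfl ?_
    simp only
    linarith
  have htsum1 : ∑' x : (ZMod N)ˣ × (ℤ × ℤ), EwNTerm N w ω (τ : ℂ) s (ι x)
      = ∑' q : ℤ × ℤ, EwNTerm N w ω (τ : ℂ) s q := hιinj.tsum_eq hsupp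
  have hGsum : Summable fun x : (ZMod N)ˣ × (ℤ × ℤ) => EwNTerm N w ω (τ : ℂ) s (ι x) :=
    hgsum.comp_injective hιinj
  have hslice : ∀ α : (ZMod N)ˣ,
      Summable fun p : ℤ × ℤ => EwNTerm N w ω (τ : ℂ) s (ι (α, p)) :=
    fun α => hGsum.comp_injective (fun p q h => congrArg Prod.snd h)
  have htsum2 : ∑' x : (ZMod N)ˣ × (ℤ × ℤ), EwNTerm N w ω (τ : ℂ) s (ι x)
      = ∑ α : (ZMod N)ˣ, ∑' p : ℤ × ℤ, EwNTerm N w ω (τ : ℂ) s (ι (α, p)) := by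
    rw [Summable.tsum_prod' hGsum hslice, tsum_fintype]
  have hEwNeq : EwN N w ω (τ : ℂ) s = ∑' q : ℤ × ℤ, EwNTerm N w ω (τ : ℂ) s q := by
    rw [EwN]
    exact tsum_subtype_eq_of_support_subset
      (fun q hq => fun h0 => hq (by rw [h0]; exact hEwN0))
  have hαeq : ∀ α : (ZMod N)ˣ,
      ω (α : ZMod N) * E w (((α : ZMod N).val : ℝ) / N) (τ : ℂ) s
        = (-(2 * (Real.pi : ℂ) * Complex.I)) ^ (-(w : ℤ)) * (Real.pi : ℂ) ^ (-s) *
            Complex.Gamma (s + (w : ℂ)) *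
            ((((τ : ℂ).im : ℂ) ^ s * (N : ℂ) ^ ((w : ℂ) + 2 * s)) *
            ∑' p : ℤ × ℤ, EwNTerm N w ω (τ : ℂ) s (ι (α, p))) := by
    intro α
    obtain ⟨ha, haN⟩ := hval α
    have hPfalse : ¬ ∃ t : ℤ, (((α : ZMod N).val : ℝ) / N) = (t : ℝ) := by
      rintro ⟨t, htq⟩
      have hNR : (0 : ℝ) < N := by exact_mod_cast Nat.pos_of_ne_zero hN0
      have h0 : (0 : ℝ) < ((α : ZMod N).val : ℝ) / N := by
        apply div_pos _ hNR
        exact_mod_cast ha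
      have h1 : (((α : ZMod N).val : ℝ)) / N < 1 := by
        rw [div_lt_one hNR]
        exact_mod_cast haN
      rw [htq] at h0 h1
      have h2 : (0 : ℤ) < t := by exact_mod_cast h0
      have h3 : t < 1 := by exact_mod_cast h1
      omega
    have hT : (∑' p : {q : ℤ × ℤ //
          (∃ t : ℤ, (((α : ZMod N).val : ℝ) / N) = (t : ℝ)) → q ≠ 0},
          ETerm w (((α : ZMod N).val : ℝ) / N) (τ : ℂ) s p.1)
        = ∑' p : ℤ × ℤ, ETerm w (((α : ZMod N).val : ℝ) / N) (τ : ℂ) s p :=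
      tsum_subtype_eq_of_support_subset (fun q _ hP => absurd hP hPfalse)
    have hptw : ∀ p : ℤ × ℤ,
        ω (α : ZMod N) * ETerm w (((α : ZMod N).val : ℝ) / N) (τ : ℂ) s p
          = ((((τ : ℂ).im : ℂ) ^ s * (N : ℂ) ^ ((w : ℂ) + 2 * s))) *
              EwNTerm N w ω (τ : ℂ) s (ι (α, p)) := by
      intro p
      rw [ETerm_eq hτ ha haN w s p]
      have hE2 : EwNTerm N w ω (τ : ℂ) s (ι (α, p))
          = ω (α : ZMod N) * (1 / (((N : ℂ) * (p.1 : ℂ) * (τ : ℂ) +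
              ((N * p.2 + ((α : ZMod N).val : ℕ) : ℤ) : ℂ)) ^ w *
              ((Complex.normSq ((N : ℂ) * (p.1 : ℂ) * (τ : ℂ) +
                ((N * p.2 + ((α : ZMod N).val : ℕ) : ℤ) : ℂ)) : ℝ) : ℂ) ^ s)) := by
        rw [EwNTerm]
        simp only [hιdef]
        rw [hcast α p.2, div_eq_mul_one_div]
      rw [hE2]
      ring
    rw [E, hT, mul_left_comm, ← tsum_mul_left]
    rw [tsum_congr hptw, tsum_mul_left]
  calc ∑ α : (ZMod N)ˣ, ω α * E w (((α : ZMod N).val : ℝ) / N) (τ : ℂ) s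
      = ∑ α : (ZMod N)ˣ, (-(2 * (Real.pi : ℂ) * Complex.I)) ^ (-(w : ℤ)) *
          (Real.pi : ℂ) ^ (-s) * Complex.Gamma (s + (w : ℂ)) *
          ((((τ : ℂ).im : ℂ) ^ s * (N : ℂ) ^ ((w : ℂ) + 2 * s)) *
          ∑' p : ℤ × ℤ, EwNTerm N w ω (τ : ℂ) s (ι (α, p))) :=
        Finset.sum_congr rfl (fun α _ => hαeq α)
    _ = (-(2 * (Real.pi : ℂ) * Complex.I)) ^ (-(w : ℤ)) * (Real.pi : ℂ) ^ (-s) *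
          Complex.Gamma (s + (w : ℂ)) *
          ((((τ : ℂ).im : ℂ) ^ s * (N : ℂ) ^ ((w : ℂ) + 2 * s)) *
          ∑ α : (ZMod N)ˣ, ∑' p : ℤ × ℤ, EwNTerm N w ω (τ : ℂ) s (ι (α, p))) := by
        rw [← Finset.mul_sum, ← Finset.mul_sum]
    _ = (-(2 * (Real.pi : ℂ) * Complex.I)) ^ (-(w : ℤ)) * (Real.pi : ℂ) ^ (-s) *
          Complex.Gamma (s + (w : ℂ)) *
          ((((τ : ℂ).im : ℂ) ^ s * (N : ℂ) ^ ((w : ℂ) + 2 * s)) * EwN N w ω (τ : ℂ) s) := by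
        rw [← htsum2, htsum1, ← hEwNeq]
    _ = (-(2 * (Real.pi : ℂ) * Complex.I)) ^ (-(w : ℤ)) * (Real.pi : ℂ) ^ (-s) *
          Complex.Gamma (s + (w : ℂ)) * ((τ.im : ℝ) : ℂ) ^ s *
          (N : ℂ) ^ ((w : ℂ) + 2 * s) * EwN N w ω (τ : ℂ) s := by
        rw [UpperHalfPlane.coe_im]
        ring
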